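/- Let ξ be an ℕ-valued random variable and F a nonnegative real random variable defined on a common probability space, with ξ and F independent. Suppose ξ is unbounded, i.e. for every k ∈ ℕ there exists k' ≥ k with ℙ(ξ = k') > 0, and suppose there exists c̃ > 0 with E[e^{c̃ F}] = ∞. Then for every c > 0, E[e^{c ξ F}] = ∞. -/

import Mathlib

open MeasureTheory ProbabilityTheory
open scoped ENNReal

/-- Remark after Theorem 2.2: if the offspring distribution `ξ` is unbounded and the
fitness `F` has some infinite exponential moment, then the product `ξ · F` has no
exponential moments at all. -/
theorem no_exp_tails_of_product
    {Ω : Type*} [MeasurableSpace Ω] (μ : Measure Ω) [IsProbabilityMeasure μ]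
    (ξ : Ω → ℕ) (F : Ω → ℝ) (hξ : Measurable ξ) (hF : Measurable F)
    (hind : IndepFun ξ F μ)
    (hF0 : ∀ᵐ ω ∂μ, 0 ≤ F ω)
    (hunb : ∀ k : ℕ, ∃ k' : ℕ, k ≤ k' ∧ 0 < μ {ω | ξ ω = k'})
    (ctil : ℝ) (hctil : 0 < ctil)
    (hinf : ∫⁻ ω, ENNReal.ofReal (Real.exp (ctil * F ω)) ∂μ = ⊤) :
    ∀ c : ℝ, 0 < c → ∫⁻ ω, ENNReal.ofReal (Real.exp (c * (ξ ω : ℝ) * F ω)) ∂μ = ⊤ := by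
  intro c hc
  obtain ⟨k, hk, hkpos⟩ := hunb ⌈ctil / c⌉₊
  have hck : ctil ≤ c * k := by
    have h1 : ctil / c ≤ (k : ℝ) := le_trans (Nat.le_ceil _) (by exact_mod_cast hk)
    calc ctil = c * (ctil / c) := by field_simp
    _ ≤ c * k := by nlinarith
  set X : Ω → ℝ≥0∞ := fun ω => Set.indicator {ω | ξ ω = k} 1 ω with hX
  set Y : Ω → ℝ≥0∞ := fun ω => ENNReal.ofReal (Real.exp (c * k * F ω)) with hY
  have hXm : Measurable X := by
    apply Measurable.indicator measurable_const
    exact hξ (measurableSet_singleton k)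
  have hYm : Measurable Y :=
    (measurable_const.mul hF).exp.ennreal_ofReal
  have hindXY : IndepFun X Y μ := by
    apply hind.comp (φ := fun n : ℕ => Set.indicator {n' | n' = k} (1 : ℕ → ℝ≥0∞) n)
      (ψ := fun x : ℝ => ENNReal.ofReal (Real.exp (c * k * x)))
    · exact Measurable.indicator measurable_const (measurableSet_singleton k)
    · exact (measurable_const.mul measurable_id).exp.ennreal_ofReal
  have hprod : (∫⁻ ω, (X * Y) ω ∂μ) = (∫⁻ ω, X ω ∂μ) * ∫⁻ ω, Y ω ∂μ :=
    lintegral_mul_eq_lintegral_mul_lintegral_of_indepFun hXm hYm hindXY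
  have hXint : ∫⁻ ω, X ω ∂μ = μ {ω | ξ ω = k} := by
    have hms : MeasurableSet {ω | ξ ω = k} := hξ (measurableSet_singleton k)
    rw [hX]
    simp only []
    rw [show (fun ω => Set.indicator {ω | ξ ω = k} (1 : Ω → ℝ≥0∞) ω) = Set.indicator {ω | ξ ω = k} 1 from rfl, lintegral_indicator hms]
    simp
  have hYint : ∫⁻ ω, Y ω ∂μ = ⊤ := by
    rw [eq_top_iff, ← hinf]
    apply lintegral_mono_ae
    filter_upwards [hF0] with ω hω
    exact ENNReal.ofReal_le_ofReal (Real.exp_le_exp.mpr (by nlinarith))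
  have hXYtop : (∫⁻ ω, (X * Y) ω ∂μ) = ⊤ := by
    rw [hprod, hXint, hYint, ENNReal.mul_top hkpos.ne']
  rw [eq_top_iff, ← hXYtop]
  apply lintegral_mono
  intro ω
  simp only [Pi.mul_apply, hX, hY]
  by_cases h : ξ ω = k
  · rw [Set.indicator_of_mem (show ω ∈ {ω | ξ ω = k} from h), Pi.one_apply, one_mul, h]
  · rw [Set.indicator_of_notMem (show ω ∉ {ω | ξ ω = k} from h), zero_mul]
    exact zero_le
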